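/- For every integer a and every sign ε ∈ {1, −1}, the group Π(a, ε, −ε, 1) is isomorphic to Π(a, −ε, ε, 1). -/

import Mathlib

/-- The relator set of the presentation
`⟨s₁, s₂, s₃ ∣ s₁s₂s₁⁻¹ = s₃^a s₂^ε, s₁s₃s₁⁻¹ = s₃^{ε₁}, s₂s₃s₂⁻¹ = s₃^{ε₂}⟩`. -/
def PiRels (a ε ε₁ ε₂ : ℤ) : Set (FreeGroup (Fin 3)) :=
  { FreeGroup.of 0 * FreeGroup.of 1 * (FreeGroup.of 0)⁻¹ * FreeGroup.of 1 ^ (-ε) *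
      FreeGroup.of 2 ^ (-a),
    FreeGroup.of 0 * FreeGroup.of 2 * (FreeGroup.of 0)⁻¹ * FreeGroup.of 2 ^ (-ε₁),
    FreeGroup.of 1 * FreeGroup.of 2 * (FreeGroup.of 1)⁻¹ * FreeGroup.of 2 ^ (-ε₂) }

/-- The group `Π(a, ε, ε₁, ε₂)` with presentation
`⟨s₁, s₂, s₃ ∣ s₁s₂s₁⁻¹ = s₃^a s₂^ε, s₁s₃s₁⁻¹ = s₃^{ε₁}, s₂s₃s₂⁻¹ = s₃^{ε₂}⟩`. -/
abbrev PiGroup (a ε ε₁ ε₂ : ℤ) : Type := PresentedGroup (PiRels a ε ε₁ ε₂)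

namespace PiProofAux

lemma mk_rel_eq_one {α : Type*} {rels : Set (FreeGroup α)} {x : FreeGroup α} (h : x ∈ rels) :
    PresentedGroup.mk rels x = 1 :=
  (QuotientGroup.eq_one_iff x).mpr (Subgroup.subset_normalClosure h)

lemma of_eq {α : Type*} {rels : Set (FreeGroup α)} (x : α) :
    PresentedGroup.mk rels (FreeGroup.of x) = PresentedGroup.of x := rfl

variable {a ε ε₁ ε₂ : ℤ}

lemma pi_rel1 (a ε ε₁ ε₂ : ℤ) :
    (PresentedGroup.of 0 : PiGroup a ε ε₁ ε₂) * PresentedGroup.of 1 *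
      (PresentedGroup.of 0)⁻¹ = (PresentedGroup.of 2) ^ a * (PresentedGroup.of 1) ^ ε := by
  have h : (PresentedGroup.of 0 : PiGroup a ε ε₁ ε₂) * PresentedGroup.of 1 *
      (PresentedGroup.of 0)⁻¹ * (PresentedGroup.of 1) ^ (-ε) *
      (PresentedGroup.of 2) ^ (-a) = 1 := by
    have h0 := mk_rel_eq_one (rels := PiRels a ε ε₁ ε₂) (Set.mem_insert _ _ :
      _ ∈ PiRels a ε ε₁ ε₂)
    simpa only [map_mul, map_inv, map_zpow, of_eq] using h0
  calc (PresentedGroup.of 0 : PiGroup a ε ε₁ ε₂) * PresentedGroup.of 1 * (PresentedGroup.of 0)⁻¹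
      = ((PresentedGroup.of 0 : PiGroup a ε ε₁ ε₂) * PresentedGroup.of 1 *
          (PresentedGroup.of 0)⁻¹ * (PresentedGroup.of 1) ^ (-ε) *
          (PresentedGroup.of 2) ^ (-a)) * ((PresentedGroup.of 2) ^ a *
          (PresentedGroup.of 1) ^ ε) := by group
    _ = (PresentedGroup.of 2) ^ a * (PresentedGroup.of 1) ^ ε := by rw [h]; group

lemma pi_rel2 (a ε ε₁ ε₂ : ℤ) :
    (PresentedGroup.of 0 : PiGroup a ε ε₁ ε₂) * PresentedGroup.of 2 *
      (PresentedGroup.of 0)⁻¹ = (PresentedGroup.of 2) ^ ε₁ := by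
  have h : (PresentedGroup.of 0 : PiGroup a ε ε₁ ε₂) * PresentedGroup.of 2 *
      (PresentedGroup.of 0)⁻¹ * (PresentedGroup.of 2) ^ (-ε₁) = 1 := by
    have h0 := mk_rel_eq_one (rels := PiRels a ε ε₁ ε₂) (Set.mem_insert_of_mem _ (Set.mem_insert _ _) :
      _ ∈ PiRels a ε ε₁ ε₂)
    simpa only [map_mul, map_inv, map_zpow, of_eq] using h0
  calc (PresentedGroup.of 0 : PiGroup a ε ε₁ ε₂) * PresentedGroup.of 2 * (PresentedGroup.of 0)⁻¹
      = ((PresentedGroup.of 0 : PiGroup a ε ε₁ ε₂) * PresentedGroup.of 2 *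
          (PresentedGroup.of 0)⁻¹ * (PresentedGroup.of 2) ^ (-ε₁)) *
          (PresentedGroup.of 2) ^ ε₁ := by group
    _ = (PresentedGroup.of 2) ^ ε₁ := by rw [h]; group

lemma pi_rel3 (a ε ε₁ ε₂ : ℤ) :
    (PresentedGroup.of 1 : PiGroup a ε ε₁ ε₂) * PresentedGroup.of 2 *
      (PresentedGroup.of 1)⁻¹ = (PresentedGroup.of 2) ^ ε₂ := by
  have h : (PresentedGroup.of 1 : PiGroup a ε ε₁ ε₂) * PresentedGroup.of 2 *
      (PresentedGroup.of 1)⁻¹ * (PresentedGroup.of 2) ^ (-ε₂) = 1 := by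
    have h0 := mk_rel_eq_one (rels := PiRels a ε ε₁ ε₂) (Set.mem_insert_of_mem _ (Set.mem_insert_of_mem _ rfl) :
      _ ∈ PiRels a ε ε₁ ε₂)
    simpa only [map_mul, map_inv, map_zpow, of_eq] using h0
  calc (PresentedGroup.of 1 : PiGroup a ε ε₁ ε₂) * PresentedGroup.of 2 * (PresentedGroup.of 1)⁻¹
      = ((PresentedGroup.of 1 : PiGroup a ε ε₁ ε₂) * PresentedGroup.of 2 *
          (PresentedGroup.of 1)⁻¹ * (PresentedGroup.of 2) ^ (-ε₂)) *
          (PresentedGroup.of 2) ^ ε₂ := by group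
    _ = (PresentedGroup.of 2) ^ ε₂ := by rw [h]; group

/-- In `PiGroup a ε ε₁ 1`, the generators `s₂` and `s₃` commute. -/
lemma pi_comm (a ε ε₁ : ℤ) :
    Commute (PresentedGroup.of 1 : PiGroup a ε ε₁ 1) (PresentedGroup.of 2) := by
  have h := pi_rel3 a ε ε₁ 1
  rw [zpow_one] at h
  exact mul_inv_eq_iff_eq_mul.mp h

section NF

variable {G : Type*} [Group G] {y z : G}

lemma nf_mul (h : Commute y z) (b c b' c' : ℤ) :
    (y ^ b * z ^ c) * (y ^ b' * z ^ c') = y ^ (b + b') * z ^ (c + c') := by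
  calc (y ^ b * z ^ c) * (y ^ b' * z ^ c')
      = y ^ b * (z ^ c * y ^ b') * z ^ c' := by group
    _ = y ^ b * (y ^ b' * z ^ c) * z ^ c' := by rw [(h.symm.zpow_zpow c b').eq]
    _ = y ^ (b + b') * z ^ (c + c') := by group

lemma nf_inv (h : Commute y z) (b c : ℤ) :
    (y ^ b * z ^ c)⁻¹ = y ^ (-b) * z ^ (-c) := by
  calc (y ^ b * z ^ c)⁻¹ = z ^ (-c) * y ^ (-b) := by group
    _ = y ^ (-b) * z ^ (-c) := (h.symm.zpow_zpow (-c) (-b)).eq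

lemma nf_zpow (h : Commute y z) (b c n : ℤ) :
    (y ^ b * z ^ c) ^ n = y ^ (b * n) * z ^ (c * n) := by
  rw [(h.zpow_zpow b c).mul_zpow, ← zpow_mul, ← zpow_mul]

lemma nf_eq_one (_h : Commute y z) {b c : ℤ} (hb : b = 0) (hc : c = 0) :
    y ^ b * z ^ c = 1 := by subst hb; subst hc; simp

lemma nf_eq_fst (_h : Commute y z) {b c : ℤ} (hb : b = 1) (hc : c = 0) :
    y ^ b * z ^ c = y := by subst hb; subst hc; simp

lemma nf_eq_snd (_h : Commute y z) {b c : ℤ} (hb : b = 0) (hc : c = 1) :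
    y ^ b * z ^ c = z := by subst hb; subst hc; simp

lemma conj_nf {g : G} (h : Commute y z) {u v w : ℤ}
    (hy : g * y * g⁻¹ = z ^ u * y ^ v) (hz : g * z * g⁻¹ = z ^ w) (b c : ℤ) :
    g * (y ^ b * z ^ c) * g⁻¹ = y ^ (v * b) * z ^ (u * b + w * c) := by
  have hyb : g * y ^ b * g⁻¹ = y ^ (v * b) * z ^ (u * b) := by
    calc g * y ^ b * g⁻¹ = (g * y * g⁻¹) ^ b := conj_zpow.symm
      _ = (z ^ u * y ^ v) ^ b := by rw [hy]
      _ = z ^ (u * b) * y ^ (v * b) := nf_zpow h.symm u v b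
      _ = y ^ (v * b) * z ^ (u * b) := (h.symm.zpow_zpow (u * b) (v * b)).eq
  have hzc : g * z ^ c * g⁻¹ = z ^ (w * c) := by
    calc g * z ^ c * g⁻¹ = (g * z * g⁻¹) ^ c := conj_zpow.symm
      _ = (z ^ w) ^ c := by rw [hz]
      _ = z ^ (w * c) := by rw [← zpow_mul]
  calc g * (y ^ b * z ^ c) * g⁻¹
      = (g * y ^ b * g⁻¹) * (g * z ^ c * g⁻¹) := by group
    _ = (y ^ (v * b) * z ^ (u * b)) * z ^ (w * c) := by rw [hyb, hzc]
    _ = y ^ (v * b) * z ^ (u * b + w * c) := by group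

end NF

/-- Conjugation by `s₁` of an element `s₂^b s₃^c` in `PiGroup a ε ε₁ 1`. -/
lemma pi_conj (a ε ε₁ : ℤ) (b c : ℤ) :
    (PresentedGroup.of 0 : PiGroup a ε ε₁ 1) *
      ((PresentedGroup.of 1) ^ b * (PresentedGroup.of 2) ^ c) * (PresentedGroup.of 0)⁻¹ =
    (PresentedGroup.of 1) ^ (ε * b) * (PresentedGroup.of 2) ^ (a * b + ε₁ * c) :=
  conj_nf (pi_comm a ε ε₁) (pi_rel1 a ε ε₁ 1) (pi_rel2 a ε ε₁ 1) b c

/-- A helper function assembling three group elements into a map `Fin 3 → G`. -/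
def f3 {G : Type*} (X Y Z : G) : Fin 3 → G
  | 0 => X
  | 1 => Y
  | 2 => Z

@[simp] lemma f3_0 {G : Type*} (X Y Z : G) : f3 X Y Z 0 = X := rfl
@[simp] lemma f3_1 {G : Type*} (X Y Z : G) : f3 X Y Z 1 = Y := rfl
@[simp] lemma f3_2 {G : Type*} (X Y Z : G) : f3 X Y Z 2 = Z := rfl
@[simp] lemma f3_mk0 {G : Type*} (X Y Z : G) (h : 0 < 3) : f3 X Y Z ⟨0, h⟩ = X := rfl
@[simp] lemma f3_mk1 {G : Type*} (X Y Z : G) (h : 1 < 3) : f3 X Y Z ⟨1, h⟩ = Y := rfl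
@[simp] lemma f3_mk2 {G : Type*} (X Y Z : G) (h : 2 < 3) : f3 X Y Z ⟨2, h⟩ = Z := rfl

/-- The main isomorphism `Π(a,1,−1,1) ≅ Π(a,−1,1,1)`, given a suitable integer matrix. -/
lemma main_iso (a p q r : ℤ) (h2p : 2 * p = -(a * q)) (hdet : p * p - q * r = 1) :
    Nonempty (PiGroup a 1 (-1) 1 ≃* PiGroup a (-1) 1 1) := by
  -- generators
  have hcG : Commute (PresentedGroup.of 1 : PiGroup a 1 (-1) 1) (PresentedGroup.of 2) := pi_comm a 1 (-1)
  have hcH : Commute (PresentedGroup.of 1 : PiGroup a (-1) 1 1) (PresentedGroup.of 2) := pi_comm a (-1) 1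
  -- the forward homomorphism
  have hφ : ∀ w ∈ PiRels a 1 (-1) 1,
      FreeGroup.lift (f3 (PresentedGroup.of 0 : PiGroup a (-1) 1 1)
        ((PresentedGroup.of 1) ^ p * (PresentedGroup.of 2) ^ r)
        ((PresentedGroup.of 1) ^ q * (PresentedGroup.of 2) ^ p)) w = 1 := by
    intro w hw
    simp only [PiRels, Set.mem_insert_iff, Set.mem_singleton_iff] at hw
    rcases hw with rfl | rfl | rfl
    · simp only [map_mul, map_inv, map_zpow, FreeGroup.lift_apply_of, f3_0, f3_1, f3_2]
      rw [pi_conj a (-1) 1 p r, nf_zpow hcH p r (-1), nf_zpow hcH q p (-a),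
        nf_mul hcH, nf_mul hcH]
      exact nf_eq_one hcH (by linarith) (by ring)
    · simp only [map_mul, map_inv, map_zpow, FreeGroup.lift_apply_of, f3_0, f3_1, f3_2]
      rw [pi_conj a (-1) 1 q p, nf_zpow hcH q p (-(-1)), nf_mul hcH]
      exact nf_eq_one hcH (by ring) (by linarith)
    · simp only [map_mul, map_inv, map_zpow, FreeGroup.lift_apply_of, f3_0, f3_1, f3_2]
      rw [nf_mul hcH, nf_inv hcH, nf_mul hcH, nf_zpow hcH, nf_mul hcH]
      exact nf_eq_one hcH (by ring) (by ring)
  -- the backward homomorphism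
  have hψ : ∀ w ∈ PiRels a (-1) 1 1,
      FreeGroup.lift (f3 (PresentedGroup.of 0 : PiGroup a 1 (-1) 1)
        ((PresentedGroup.of 1) ^ p * (PresentedGroup.of 2) ^ (-r))
        ((PresentedGroup.of 1) ^ (-q) * (PresentedGroup.of 2) ^ p)) w = 1 := by
    intro w hw
    simp only [PiRels, Set.mem_insert_iff, Set.mem_singleton_iff] at hw
    rcases hw with rfl | rfl | rfl
    · simp only [map_mul, map_inv, map_zpow, FreeGroup.lift_apply_of, f3_0, f3_1, f3_2]
      rw [pi_conj a 1 (-1) p (-r), nf_zpow hcG p (-r) (-(-1)), nf_zpow hcG (-q) p (-a),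
        nf_mul hcG, nf_mul hcG]
      exact nf_eq_one hcG (by linarith) (by ring)
    · simp only [map_mul, map_inv, map_zpow, FreeGroup.lift_apply_of, f3_0, f3_1, f3_2]
      rw [pi_conj a 1 (-1) (-q) p, nf_zpow hcG (-q) p (-1), nf_mul hcG]
      exact nf_eq_one hcG (by ring) (by linarith)
    · simp only [map_mul, map_inv, map_zpow, FreeGroup.lift_apply_of, f3_0, f3_1, f3_2]
      rw [nf_mul hcG, nf_inv hcG, nf_mul hcG, nf_zpow hcG, nf_mul hcG]
      exact nf_eq_one hcG (by ring) (by ring)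
  let φ : PiGroup a 1 (-1) 1 →* PiGroup a (-1) 1 1 := PresentedGroup.toGroup hφ
  let ψ : PiGroup a (-1) 1 1 →* PiGroup a 1 (-1) 1 := PresentedGroup.toGroup hψ
  have hψφ : ψ.comp φ = MonoidHom.id (PiGroup a 1 (-1) 1) := by
    refine PresentedGroup.ext fun i => ?_
    fin_cases i
    · simp only [MonoidHom.comp_apply, MonoidHom.id_apply, φ, ψ,
        PresentedGroup.toGroup.of, f3_0, f3_mk0]
      rfl
    · simp only [MonoidHom.comp_apply, MonoidHom.id_apply, φ, ψ,
        PresentedGroup.toGroup.of, f3_0, f3_1, f3_2, f3_mk0, f3_mk1, f3_mk2, map_mul, map_zpow]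
      rw [nf_zpow hcG p (-r) p, nf_zpow hcG (-q) p r, nf_mul hcG]
      exact nf_eq_fst hcG (by linarith) (by ring)
    · simp only [MonoidHom.comp_apply, MonoidHom.id_apply, φ, ψ,
        PresentedGroup.toGroup.of, f3_0, f3_1, f3_2, f3_mk0, f3_mk1, f3_mk2, map_mul, map_zpow]
      rw [nf_zpow hcG p (-r) q, nf_zpow hcG (-q) p p, nf_mul hcG]
      exact nf_eq_snd hcG (by ring) (by linarith)
  have hφψ : φ.comp ψ = MonoidHom.id (PiGroup a (-1) 1 1) := by
    refine PresentedGroup.ext fun i => ?_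
    fin_cases i
    · simp only [MonoidHom.comp_apply, MonoidHom.id_apply, φ, ψ,
        PresentedGroup.toGroup.of, f3_0, f3_mk0]
      rfl
    · simp only [MonoidHom.comp_apply, MonoidHom.id_apply, φ, ψ,
        PresentedGroup.toGroup.of, f3_0, f3_1, f3_2, f3_mk0, f3_mk1, f3_mk2, map_mul, map_zpow]
      rw [nf_zpow hcH p r p, nf_zpow hcH q p (-r), nf_mul hcH]
      exact nf_eq_fst hcH (by linarith) (by ring)
    · simp only [MonoidHom.comp_apply, MonoidHom.id_apply, φ, ψ,
        PresentedGroup.toGroup.of, f3_0, f3_1, f3_2, f3_mk0, f3_mk1, f3_mk2, map_mul, map_zpow]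
      rw [nf_zpow hcH p r (-q), nf_zpow hcH q p p, nf_mul hcH]
      exact nf_eq_snd hcH (by ring) (by linarith)
  exact ⟨MonoidHom.toMulEquiv φ ψ hψφ hφψ⟩

/-- The main isomorphism exists for every `a`. -/
lemma main (a : ℤ) : Nonempty (PiGroup a 1 (-1) 1 ≃* PiGroup a (-1) 1 1) := by
  rcases Int.even_or_odd a with ⟨k, hk⟩ | ⟨k, hk⟩
  · exact main_iso a (-k) 1 (k * k - 1) (by rw [hk]; ring) (by ring)
  · exact main_iso a (-a) 2 (2 * k * k + 2 * k) (by ring) (by rw [hk]; ring)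

end PiProofAux

/-- `Π(a, ε, −ε, 1) ≅ Π(a, −ε, ε, 1)`. -/
theorem PiGroup_iso_neg_sign (a ε : ℤ) (hε : ε = 1 ∨ ε = -1) :
    Nonempty (PiGroup a ε (-ε) 1 ≃* PiGroup a (-ε) ε 1) := by
  rcases hε with rfl | rfl
  · exact PiProofAux.main a
  · rw [show (-(-1) : ℤ) = 1 from neg_neg 1]
    obtain ⟨e⟩ := PiProofAux.main a
    exact ⟨e.symm⟩
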